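/- Let N ≥ 1, let x_j = cos(jπ/N) for j = 0, …, N be the Chebyshev–Gauss–Lobatto nodes, and let the weights be w_0 = w_N = π/(2N) and w_j = π/N for 1 ≤ j ≤ N−1. Then for every polynomial v of degree at most 2N − 1, the quadrature formula is exact: Σ_{j=0}^{N} v(x_j)·w_j = ∫_{−1}^{1} v(x)·(1 − x²)^{−1/2} dx. -/

import Mathlib

open Polynomial Real Finset intervalIntegral

namespace CGLaux

open Polynomial.Chebyshev MeasureTheory

/-- Degree and top coefficient of the Chebyshev polynomials. -/
lemma T_deg : ∀ n : ℕ, (T ℝ n).degree ≤ n ∧ (T ℝ n).coeff n = 2 ^ (n - 1) := by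
  have key : ∀ n : ℕ, (T ℝ n).natDegree ≤ n ∧ (T ℝ n).coeff n = 2 ^ (n - 1) := by
    intro n
    induction n using Nat.twoStepInduction with
    | zero => exact ⟨by simp [T_zero], by simp [T_zero]⟩
    | one => exact ⟨by simp [T_one], by simp [T_one]⟩
    | more n ih0 ih1 =>
      have hrec : T ℝ ((n : ℕ) + 2 : ℕ) = 2 * X * T ℝ ((n + 1 : ℕ) : ℤ) - T ℝ (n : ℤ) := by
        push_cast
        have := T_add_two ℝ (n : ℤ)
        convert this using 3 <;> push_cast <;> ring
      have hC2 : ((2 : ℝ[X])) = Polynomial.C (2 : ℝ) := (map_ofNat Polynomial.C 2).symm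
      have hcoeff : ∀ m : ℕ, 1 ≤ m →
          (T ℝ ((n : ℕ) + 2 : ℕ)).coeff m
            = 2 * (T ℝ ((n + 1 : ℕ) : ℤ)).coeff (m - 1) - (T ℝ (n : ℤ)).coeff m := by
        intro m hm
        obtain ⟨m', rfl⟩ : ∃ m', m = m' + 1 := ⟨m - 1, (Nat.succ_pred_eq_of_pos hm).symm⟩
        rw [hrec, Polynomial.coeff_sub, mul_assoc, hC2, Polynomial.coeff_C_mul,
          Polynomial.coeff_X_mul]
        simp
      constructor
      · rw [Polynomial.natDegree_le_iff_coeff_eq_zero]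
        intro m hm
        rw [hcoeff m (by omega)]
        have h1 : (T ℝ ((n + 1 : ℕ) : ℤ)).coeff (m - 1) = 0 :=
          Polynomial.coeff_eq_zero_of_natDegree_lt (by omega)
        have h0 : (T ℝ (n : ℤ)).coeff m = 0 :=
          Polynomial.coeff_eq_zero_of_natDegree_lt (by omega)
        rw [h1, h0]; ring
      · rw [hcoeff (n + 2) (by omega)]
        have h0 : (T ℝ (n : ℤ)).coeff (n + 2) = 0 :=
          Polynomial.coeff_eq_zero_of_natDegree_lt (by omega)
        have : (n + 2) - 1 = n + 1 := by omega
        rw [this, ih1.2, h0]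
        simp [pow_succ]
        ring
  intro n
  refine ⟨?_, (key n).2⟩
  exact (Polynomial.degree_le_natDegree).trans (by exact_mod_cast Nat.cast_le.mpr (key n).1)

lemma T_natDegree (n : ℕ) : (T ℝ n).natDegree = n := by
  have h := T_deg n
  have hne : (T ℝ n).coeff n ≠ 0 := by
    rw [h.2]; positivity
  have hle : (T ℝ n).natDegree ≤ n :=
    Polynomial.natDegree_le_iff_degree_le.mpr h.1
  have hge : n ≤ (T ℝ n).natDegree := Polynomial.le_natDegree_of_ne_zero hne
  omega

/-- Every polynomial of degree at most `d` lies in the span of `T 0, …, T d`. -/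
lemma mem_span_T (d : ℕ) : ∀ p : ℝ[X], p.natDegree ≤ d →
    p ∈ Submodule.span ℝ ((fun k : ℕ => T ℝ k) '' Set.Iic d) := by
  induction d with
  | zero =>
    intro p hp
    have : p = Polynomial.C (p.coeff 0) := Polynomial.eq_C_of_natDegree_le_zero hp
    rw [this]
    have h1 : (T ℝ (0 : ℕ)) ∈ ((fun k : ℕ => T ℝ k) '' Set.Iic 0) :=
      ⟨0, Set.mem_Iic.mpr le_rfl, rfl⟩
    have : Polynomial.C (p.coeff 0) = (p.coeff 0) • T ℝ (0 : ℕ) := by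
      simp [T_zero, Polynomial.smul_eq_C_mul]
    rw [this]
    exact Submodule.smul_mem _ _ (Submodule.subset_span h1)
  | succ d ih =>
    intro p hp
    have hmono : Submodule.span ℝ ((fun k : ℕ => T ℝ k) '' Set.Iic d) ≤
        Submodule.span ℝ ((fun k : ℕ => T ℝ k) '' Set.Iic (d + 1)) :=
      Submodule.span_mono (Set.image_mono (Set.Iic_subset_Iic.mpr (by omega)))
    by_cases h : p.natDegree ≤ d
    · exact hmono (ih p h)
    · set c : ℝ := p.coeff (d + 1) / 2 ^ d with hc
      set q : ℝ[X] := p - c • T ℝ ((d + 1 : ℕ) : ℤ) with hq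
      have hTd : (T ℝ ((d + 1 : ℕ) : ℤ)).natDegree = d + 1 := T_natDegree (d + 1)
      have hqdeg : q.natDegree ≤ d := by
        rw [Polynomial.natDegree_le_iff_coeff_eq_zero]
        intro m hm
        rw [hq, Polynomial.coeff_sub, Polynomial.coeff_smul]
        rcases eq_or_lt_of_le (Nat.succ_le_of_lt hm) with hmd | hmd
        · have h2 : (T ℝ ((d + 1 : ℕ) : ℤ)).coeff (d + 1) = 2 ^ d := by
            have := (T_deg (d + 1)).2
            simpa using this
          rw [← hmd, h2]
          rw [hc]
          rw [smul_eq_mul, div_mul_cancel₀ _ (by positivity), sub_self]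
        · have h1 : p.coeff m = 0 :=
            Polynomial.coeff_eq_zero_of_natDegree_lt (by omega)
          have h2 : (T ℝ ((d + 1 : ℕ) : ℤ)).coeff m = 0 :=
            Polynomial.coeff_eq_zero_of_natDegree_lt (by omega)
          rw [h1, h2]; simp
      have hmem : T ℝ ((d + 1 : ℕ) : ℤ) ∈ ((fun k : ℕ => T ℝ k) '' Set.Iic (d + 1)) :=
        ⟨d + 1, Set.mem_Iic.mpr le_rfl, rfl⟩
      have : p = q + c • T ℝ ((d + 1 : ℕ) : ℤ) := by rw [hq]; ring
      rw [this]
      exact Submodule.add_mem _ (hmono (ih q hqdeg))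
        (Submodule.smul_mem _ _ (Submodule.subset_span hmem))

/-- The trapezoidal cosine sum. -/
lemma trig_sum (N k : ℕ) (hN : 1 ≤ N) (hk : k ≤ 2 * N - 1) :
    ∑ j ∈ Finset.range (N + 1),
      Real.cos ((k : ℝ) * ((j : ℝ) * π / (N : ℝ)))
        * (if j = 0 ∨ j = N then π / (2 * (N : ℝ)) else π / (N : ℝ))
      = if k = 0 then π else 0 := by
  have hNR : (N : ℝ) ≠ 0 := by positivity
  have hN0 : (0:ℕ) ≠ N := by omega
  -- splitting of the weighted sum
  have split : ∀ u : ℕ → ℝ,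
      (∑ j ∈ Finset.range (N + 1),
          u j * (if j = 0 ∨ j = N then π / (2 * (N:ℝ)) else π / (N:ℝ)))
        = (π / N) * (∑ j ∈ Finset.range (N + 1), u j) - (π / (2 * N)) * (u 0 + u N) := by
    intro u
    have h1 : ∀ j ∈ Finset.range (N+1),
        u j * (if j = 0 ∨ j = N then π / (2 * (N:ℝ)) else π / (N:ℝ))
          = (π / N) * u j - ((if j = 0 then (π/(2*(N:ℝ))) * u j else 0)
              + (if j = N then (π/(2*(N:ℝ))) * u j else 0)) := by
      intro j _
      by_cases h0 : j = 0
      · rw [if_pos (Or.inl h0), if_pos h0, if_neg (by omega : ¬ j = N)]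
        ring
      · by_cases hn : j = N
        · rw [if_pos (Or.inr hn), if_neg h0, if_pos hn]
          ring
        · rw [if_neg (by tauto : ¬(j = 0 ∨ j = N)), if_neg h0, if_neg hn]
          ring
    rw [Finset.sum_congr rfl h1, Finset.sum_sub_distrib, Finset.sum_add_distrib]
    rw [Finset.sum_ite_eq' (Finset.range (N+1)) 0 (fun j => (π/(2*(N:ℝ))) * u j),
        Finset.sum_ite_eq' (Finset.range (N+1)) N (fun j => (π/(2*(N:ℝ))) * u j)]
    rw [if_pos (by simp), if_pos (by simp [Finset.mem_range])]
    rw [← Finset.mul_sum]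
    ring
  rcases Nat.eq_zero_or_pos k with hk0 | hk1
  · subst hk0
    rw [if_pos rfl]
    have : ∀ j ∈ Finset.range (N+1), Real.cos ((0:ℕ) * ((j:ℝ) * π / N))
        * (if j = 0 ∨ j = N then π / (2 * (N:ℝ)) else π / (N:ℝ))
        = (1:ℝ) * (if j = 0 ∨ j = N then π / (2 * (N:ℝ)) else π / (N:ℝ)) := by
      intro j _; norm_num
    rw [Finset.sum_congr rfl this, split (fun _ => 1)]
    simp only [Finset.sum_const, Finset.card_range, nsmul_eq_mul]
    field_simp
    push_cast; ring
  · rw [if_neg (by omega)]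
    set z : ℂ := Complex.exp ((↑((k:ℝ) * π / N)) * Complex.I) with hz
    have habs : Complex.normSq z = 1 := by
      rw [Complex.normSq_eq_norm_sq, hz, Complex.norm_exp_ofReal_mul_I]
      norm_num
    have hpow : ∀ j : ℕ, z ^ j = Complex.exp ((↑((j:ℝ) * ((k:ℝ) * π / N))) * Complex.I) := by
      intro j
      rw [hz, ← Complex.exp_nat_mul]
      congr 1
      push_cast
      ring
    have hre : ∀ j : ℕ, (z ^ j).re = Real.cos ((k:ℝ) * ((j:ℝ) * π / N)) := by
      intro j
      rw [hpow j, Complex.exp_ofReal_mul_I_re]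
      congr 1
      ring
    have hzN : z ^ N = (-1 : ℂ) ^ k := by
      rw [hpow N]
      have : (N:ℝ) * ((k:ℝ) * π / N) = (k:ℝ) * π := by field_simp
      rw [this]
      have : ((↑((k:ℝ) * π)) * Complex.I) = (k:ℕ) * (↑Real.pi * Complex.I) := by
        push_cast; ring
      rw [this, Complex.exp_nat_mul, Complex.exp_pi_mul_I]
    have hz1 : z ≠ 1 := by
      intro h
      rw [hz, Complex.exp_eq_one_iff] at h
      obtain ⟨n, hn⟩ := h
      have him : ((k:ℝ) * π / N) = n * (2 * π) := by
        have := congrArg Complex.im hn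
        simpa using this
      have hkR : (k:ℝ) = 2 * n * N := by
        have hpi := Real.pi_ne_zero
        field_simp at him
        nlinarith [Real.pi_pos]
      have hkZ : (k:ℤ) = 2 * n * N := by exact_mod_cast hkR
      have hkle : (k:ℤ) ≤ 2 * (N:ℤ) - 1 := by
        have hkN : k ≤ 2 * N - 1 := hk
        omega
      have hk1' : (1:ℤ) ≤ (k:ℤ) := by exact_mod_cast hk1
      have hN1 : (1:ℤ) ≤ (N:ℤ) := by exact_mod_cast hN
      have hn0 : 0 < n := by nlinarith
      nlinarith
    -- rewrite the sum
    have hsum := split (fun j => (z ^ j).re)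
    have : ∀ j ∈ Finset.range (N+1), Real.cos ((k:ℝ) * ((j:ℝ) * π / N))
        * (if j = 0 ∨ j = N then π / (2 * (N:ℝ)) else π / (N:ℝ))
        = (z ^ j).re * (if j = 0 ∨ j = N then π / (2 * (N:ℝ)) else π / (N:ℝ)) := by
      intro j _; rw [hre j]
    rw [Finset.sum_congr rfl this, hsum, ← Complex.re_sum, geom_sum_eq hz1]
    rcases Nat.even_or_odd k with hke | hko
    · have h1 : z ^ N = 1 := by rw [hzN, hke.neg_one_pow]
      have h2 : (z ^ (N+1) - 1) / (z - 1) = 1 := by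
        rw [pow_succ, h1, one_mul, div_self (sub_ne_zero.mpr hz1)]
      rw [h2, h1]
      simp
      field_simp
      ring
    · have h1 : z ^ N = -1 := by rw [hzN, hko.neg_one_pow]
      have h2 : (z ^ (N+1) - 1) / (z - 1) = -(z + 1) / (z - 1) := by
        rw [pow_succ, h1]; ring_nf
      rw [h2, h1]
      have h3 : ((-(z + 1)) / (z - 1)).re = 0 := by
        rw [Complex.div_re]
        have : Complex.normSq z = z.re * z.re + z.im * z.im := Complex.normSq_apply z
        simp only [Complex.neg_re, Complex.add_re, Complex.sub_re, Complex.one_re,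
          Complex.neg_im, Complex.add_im, Complex.sub_im, Complex.one_im]
        rw [this] at habs
        have hnum : -(z.re + 1) * (z.re - 1) + -(z.im + 0) * (z.im - 0) = 0 := by nlinarith
        rw [← add_div, hnum]
        simp
      rw [h3]
      simp

/-- Integral of `cos (k θ)` over `[0, π]`. -/
lemma integral_cos_k (k : ℕ) :
    ∫ θ in (0:ℝ)..π, Real.cos ((k : ℝ) * θ) = if k = 0 then π else 0 := by
  rcases Nat.eq_zero_or_pos k with hk | hk
  · subst hk
    simp
  · have hkR : (k : ℝ) ≠ 0 := by positivity
    rw [if_neg (by omega)]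
    have hderiv : ∀ θ ∈ Set.uIcc (0:ℝ) π,
        HasDerivAt (fun t : ℝ => Real.sin ((k:ℝ) * t) / k) (Real.cos ((k:ℝ) * θ)) θ := by
      intro θ _
      have h1 : HasDerivAt (fun t : ℝ => (k:ℝ) * t) (k:ℝ) θ := by
        simpa using (hasDerivAt_id θ).const_mul (k:ℝ)
      have h2 := (Real.hasDerivAt_sin ((k:ℝ) * θ)).comp θ h1
      have h3 := h2.div_const (k:ℝ)
      rw [mul_div_cancel_right₀ _ hkR] at h3
      exact h3
    rw [intervalIntegral.integral_eq_sub_of_hasDerivAt hderiv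
      (by apply Continuous.intervalIntegrable; fun_prop)]
    simp [Real.sin_nat_mul_pi]

lemma weight_le (x : ℝ) (hx : x ∈ Set.Icc (-1:ℝ) 1) :
    (1 - x ^ 2) ^ (-(1 / 2 : ℝ))
      ≤ (1 + x) ^ (-(1 / 2 : ℝ)) + (1 - x) ^ (-(1 / 2 : ℝ)) := by
  obtain ⟨h1, h2⟩ := hx
  have ha : (0:ℝ) ≤ 1 + x := by linarith
  have hb : (0:ℝ) ≤ 1 - x := by linarith
  have hfact : (1 - x ^ 2 : ℝ) = (1 + x) * (1 - x) := by ring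
  rw [hfact, Real.mul_rpow ha hb]
  rcases le_total 0 x with hx0 | hx0
  · have h1x : (1:ℝ) ≤ 1 + x := by linarith
    have : (1 + x) ^ (-(1 / 2 : ℝ)) ≤ 1 :=
      Real.rpow_le_one_of_one_le_of_nonpos h1x (by norm_num)
    calc (1 + x) ^ (-(1 / 2 : ℝ)) * (1 - x) ^ (-(1 / 2 : ℝ))
        ≤ 1 * (1 - x) ^ (-(1 / 2 : ℝ)) := by
          apply mul_le_mul_of_nonneg_right this (Real.rpow_nonneg hb _)
      _ = (1 - x) ^ (-(1 / 2 : ℝ)) := one_mul _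
      _ ≤ _ := le_add_of_nonneg_left (Real.rpow_nonneg ha _)
  · have h1x : (1:ℝ) ≤ 1 - x := by linarith
    have : (1 - x) ^ (-(1 / 2 : ℝ)) ≤ 1 :=
      Real.rpow_le_one_of_one_le_of_nonpos h1x (by norm_num)
    calc (1 + x) ^ (-(1 / 2 : ℝ)) * (1 - x) ^ (-(1 / 2 : ℝ))
        ≤ (1 + x) ^ (-(1 / 2 : ℝ)) * 1 := by
          apply mul_le_mul_of_nonneg_left this (Real.rpow_nonneg ha _)
      _ = (1 + x) ^ (-(1 / 2 : ℝ)) := mul_one _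
      _ ≤ _ := le_add_of_nonneg_right (Real.rpow_nonneg hb _)

lemma integrable_bound :
    IntervalIntegrable (fun x : ℝ => (1 + x) ^ (-(1 / 2 : ℝ)) + (1 - x) ^ (-(1 / 2 : ℝ)))
      volume (-1) 1 := by
  have hbase : IntervalIntegrable (fun x : ℝ => x ^ (-(1 / 2 : ℝ))) volume 0 2 :=
    intervalIntegral.intervalIntegrable_rpow' (by norm_num)
  have h1 : IntervalIntegrable (fun x : ℝ => (x + 1) ^ (-(1 / 2 : ℝ))) volume (-1) 1 := by
    have := hbase.comp_add_right 1
    norm_num at this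
    exact this
  have h1' : IntervalIntegrable (fun x : ℝ => (1 + x) ^ (-(1 / 2 : ℝ))) volume (-1) 1 := by
    simpa [add_comm] using h1
  have h2 : IntervalIntegrable (fun x : ℝ => (1 - x) ^ (-(1 / 2 : ℝ))) volume (-1) 1 := by
    have := hbase.comp_sub_left 1
    norm_num at this
    exact this.symm
  exact h1'.add h2

lemma integrable_weight (p : ℝ[X]) :
    IntervalIntegrable (fun x => p.eval x * (1 - x ^ 2) ^ (-(1 / 2 : ℝ)))
      volume (-1) 1 := by
  obtain ⟨M, hM⟩ := (isCompact_Icc (a := (-1:ℝ)) (b := 1)).exists_bound_of_continuousOn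
    (p.continuous.continuousOn)
  have hM0 : 0 ≤ M := le_trans (norm_nonneg _) (hM 0 (by norm_num))
  have hbd := (integrable_bound.const_mul M)
  apply hbd.mono_fun
  · apply Measurable.aestronglyMeasurable
    apply Measurable.mul p.continuous.measurable
    exact (measurable_const.sub (measurable_id.pow_const 2)).pow measurable_const
  · rw [Filter.EventuallyLE]
    apply MeasureTheory.ae_restrict_of_forall_mem measurableSet_uIoc
    intro x hx
    have hx' : x ∈ Set.Icc (-1:ℝ) 1 := by
      rcases Set.mem_uIoc.mp hx with h | h
      · exact ⟨le_of_lt h.1, h.2⟩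
      · constructor <;> [linarith [h.2]; linarith [h.1]]
    have hw0 : 0 ≤ (1 - x ^ 2) ^ (-(1 / 2 : ℝ)) := Real.rpow_nonneg (by nlinarith [hx'.1, hx'.2]) _
    have hb0 : 0 ≤ (1 + x) ^ (-(1 / 2 : ℝ)) + (1 - x) ^ (-(1 / 2 : ℝ)) := by
      have := Real.rpow_nonneg (by linarith [hx'.1] : (0:ℝ) ≤ 1 + x) (-(1/2:ℝ))
      have := Real.rpow_nonneg (by linarith [hx'.2] : (0:ℝ) ≤ 1 - x) (-(1/2:ℝ))
      linarith
    simp only [norm_mul, Real.norm_eq_abs]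
    calc |p.eval x| * |(1 - x ^ 2) ^ (-(1 / 2 : ℝ))|
        = |p.eval x| * (1 - x ^ 2) ^ (-(1 / 2 : ℝ)) := by rw [abs_of_nonneg hw0]
      _ ≤ M * ((1 + x) ^ (-(1 / 2 : ℝ)) + (1 - x) ^ (-(1 / 2 : ℝ))) := by
          apply mul_le_mul (hM x hx') (weight_le x hx') hw0 hM0
      _ ≤ |M| * |(1 + x) ^ (-(1 / 2 : ℝ)) + (1 - x) ^ (-(1 / 2 : ℝ))| :=
          le_of_eq (by rw [abs_of_nonneg hM0, abs_of_nonneg hb0])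

lemma weight_integral (p : ℝ[X]) :
    ∫ x in (-1:ℝ)..1, p.eval x * (1 - x ^ 2) ^ (-(1 / 2 : ℝ))
      = ∫ θ in (0:ℝ)..π, p.eval (Real.cos θ) := by
  set g : ℝ → ℝ := fun x => p.eval x * (1 - x ^ 2) ^ (-(1 / 2 : ℝ)) with hg
  have hpi : (0:ℝ) ≤ π := Real.pi_pos.le
  have huIcc : Set.uIcc (0:ℝ) π = Set.Icc 0 π := Set.uIcc_of_le hpi
  have hmaps : ∀ x ∈ Set.uIcc (0:ℝ) π, Real.cos x ∈ Set.Icc (-1:ℝ) 1 :=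
    fun x _ => ⟨Real.neg_one_le_cos x, Real.cos_le_one x⟩
  have himage : Real.cos '' Set.uIcc (0:ℝ) π ⊆ Set.Icc (-1:ℝ) 1 := by
    rintro y ⟨x, hx, rfl⟩; exact hmaps x hx
  have himageIoo : Real.cos '' Set.Ioo (0:ℝ) π ⊆ Set.Ioo (-1:ℝ) 1 := by
    rintro y ⟨x, hx, rfl⟩
    constructor
    · have := Real.cos_lt_cos_of_nonneg_of_le_pi (le_of_lt hx.1) le_rfl hx.2
      simpa [Real.cos_pi] using this
    · have := Real.cos_lt_cos_of_nonneg_of_le_pi (le_refl (0:ℝ)) (le_of_lt hx.2) hx.1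
      simpa [Real.cos_zero] using this
  -- continuity of g on Ioo (-1) 1
  have hgcont : ContinuousOn g (Set.Ioo (-1:ℝ) 1) := by
    apply ContinuousOn.mul p.continuous.continuousOn
    apply ContinuousOn.rpow_const
    · exact (continuous_const.sub (continuous_pow 2)).continuousOn
    · rintro x ⟨h1, h2⟩
      left
      nlinarith
  have hptwise : ∀ θ ∈ Set.Ioo (0:ℝ) π,
      (fun θ => -Real.sin θ) θ • (g ∘ Real.cos) θ = -(p.eval (Real.cos θ)) := by
    intro θ hθ
    have hs : 0 < Real.sin θ := Real.sin_pos_of_pos_of_lt_pi hθ.1 hθ.2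
    have h1 : 1 - Real.cos θ ^ 2 = Real.sin θ ^ 2 := (Real.sin_sq θ).symm
    have h2 : (Real.sin θ ^ 2 : ℝ) ^ (-(1/2:ℝ)) = (Real.sin θ)⁻¹ := by
      rw [← Real.rpow_natCast (Real.sin θ) 2, ← Real.rpow_mul hs.le]
      norm_num
      exact Real.rpow_neg_one _
    simp only [Function.comp, smul_eq_mul, hg, h1, h2]
    field_simp
  have hae_notends : ∀ᵐ θ : ℝ ∂MeasureTheory.volume, θ ∉ ({0, π} : Set ℝ) := by
    have : (MeasureTheory.volume : MeasureTheory.Measure ℝ) ({0, π} : Set ℝ) = 0 :=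
      ((Set.finite_singleton π).insert 0).measure_zero _
    exact (MeasureTheory.measure_eq_zero_iff_ae_notMem).mp this
  have key := intervalIntegral.integral_comp_smul_deriv''' (a := 0) (b := π)
    (f := Real.cos) (f' := fun θ => -Real.sin θ) (g := g)
    (Real.continuous_cos.continuousOn)
    (fun x hx => (Real.hasDerivAt_cos x).hasDerivWithinAt)
    (hgcont.mono (by
      rw [min_eq_left hpi, max_eq_right hpi]
      exact himageIoo))
    (by
      apply MeasureTheory.IntegrableOn.mono_set _ himage
      have h := integrable_weight p
      rw [intervalIntegrable_iff, Set.uIoc_of_le (by norm_num : (-1:ℝ) ≤ 1)] at h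
      exact (integrableOn_Icc_iff_integrableOn_Ioc (by finiteness)).mpr h)
    (by
      -- integrability of θ ↦ -sin θ • g (cos θ) on [0, π]
      rw [Set.uIcc_of_le hpi]
      have hcont : Continuous fun θ : ℝ => -(p.eval (Real.cos θ)) := by fun_prop
      apply (hcont.integrableOn_Icc).congr
      filter_upwards [MeasureTheory.ae_restrict_mem measurableSet_Icc,
        MeasureTheory.ae_restrict_of_ae hae_notends] with θ hmem hnot
      have hIoo : θ ∈ Set.Ioo (0:ℝ) π := by
        simp only [Set.mem_insert_iff, Set.mem_singleton_iff, not_or] at hnot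
        exact ⟨lt_of_le_of_ne hmem.1 (Ne.symm hnot.1), lt_of_le_of_ne hmem.2 hnot.2⟩
      exact (hptwise θ hIoo).symm)
  rw [Real.cos_zero, Real.cos_pi] at key
  have hL : ∫ θ in (0:ℝ)..π, (fun θ => -Real.sin θ) θ • (g ∘ Real.cos) θ
      = ∫ θ in (0:ℝ)..π, -(p.eval (Real.cos θ)) := by
    apply intervalIntegral.integral_congr_ae
    have h1 : ∀ᵐ θ : ℝ ∂MeasureTheory.volume, θ ∉ ({0, π} : Set ℝ) := by
      have : (MeasureTheory.volume : MeasureTheory.Measure ℝ) ({0, π} : Set ℝ) = 0 :=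
        ((Set.finite_singleton π).insert 0).measure_zero _
      exact (MeasureTheory.measure_eq_zero_iff_ae_notMem).mp this
    filter_upwards [h1] with θ hθ hmem
    rw [Set.uIoc_of_le hpi] at hmem
    simp only [Set.mem_insert_iff, Set.mem_singleton_iff, not_or] at hθ
    have hIoo : θ ∈ Set.Ioo (0:ℝ) π := ⟨hmem.1, lt_of_le_of_ne hmem.2 hθ.2⟩
    exact hptwise θ hIoo
  rw [hL] at key
  rw [intervalIntegral.integral_neg] at key
  have hsymm : ∫ u in (1:ℝ)..(-1), g u = -∫ u in (-1:ℝ)..1, g u :=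
    intervalIntegral.integral_symm (-1) 1
  rw [hsymm] at key
  have := neg_injective key
  rw [hg] at this
  exact this.symm

end CGLaux

/-- Exactness of the Chebyshev–Gauss–Lobatto quadrature rule: with nodes
`x_j = cos(jπ/N)`, `j = 0, …, N`, and weights `w_0 = w_N = π/(2N)`,
`w_j = π/N` for `1 ≤ j ≤ N−1`, the rule integrates exactly every polynomial
of degree at most `2N − 1` against the Chebyshev weight `(1 − x²)^{−1/2}`. -/
theorem chebyshev_gauss_lobatto_quadrature (N : ℕ) (hN : 1 ≤ N)
    (v : Polynomial ℝ) (hv : v.natDegree ≤ 2 * N - 1) :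
    ∑ j ∈ Finset.range (N + 1),
        v.eval (Real.cos ((j : ℝ) * π / (N : ℝ)))
          * (if j = 0 ∨ j = N then π / (2 * (N : ℝ)) else π / (N : ℝ))
      = ∫ x in (-1 : ℝ)..1, v.eval x * (1 - x ^ 2) ^ (-(1 / 2 : ℝ)) := by
  rw [CGLaux.weight_integral v]
  have hvmem := CGLaux.mem_span_T (2 * N - 1) v hv
  clear hv
  induction hvmem using Submodule.span_induction with
  | mem p hp =>
    obtain ⟨k, hk, rfl⟩ := hp
    have hev : ∀ θ : ℝ, (Polynomial.Chebyshev.T ℝ (k : ℤ)).eval (Real.cos θ)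
        = Real.cos ((k : ℝ) * θ) := by
      intro θ
      have := Polynomial.Chebyshev.T_real_cos θ (k : ℤ)
      simpa using this
    simp only [hev]
    rw [CGLaux.integral_cos_k k]
    exact CGLaux.trig_sum N k hN (Set.mem_Iic.mp hk)
  | zero => simp
  | add p q hp hq ihp ihq =>
    simp only [Polynomial.eval_add, add_mul]
    have ip : IntervalIntegrable (fun θ => Polynomial.eval (Real.cos θ) p)
        MeasureTheory.volume 0 π := by
      apply Continuous.intervalIntegrable; fun_prop
    have iq : IntervalIntegrable (fun θ => Polynomial.eval (Real.cos θ) q)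
        MeasureTheory.volume 0 π := by
      apply Continuous.intervalIntegrable; fun_prop
    rw [Finset.sum_add_distrib, ihp, ihq, ← intervalIntegral.integral_add ip iq]
  | smul a p hp ihp =>
    simp only [Polynomial.eval_smul, smul_eq_mul, mul_assoc]
    rw [← Finset.mul_sum, ihp, ← intervalIntegral.integral_const_mul]
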